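/- Let A be an m×n real matrix and B an n×m real matrix. Let T and U be two disjoint subsets of {1,...,n} with |T| = j and |U| = n - j. Then the sum over all subsets S of U of size m - j of det(A_{[m], S∪T}) · det(B_{S∪T, [m]}) equals (-1)^j times the determinant of the (j+m)×(j+m) block matrix [[0_{j×j}, B_{T,[m]}], [A_{[m],T}, A_{[m],U} B_{U,[m]}]], where A_{[m],S∪T} denotes the submatrix of A consisting of the columns indexed by S∪T and B_{S∪T,[m]} the submatrix of B consisting of the rows indexed by S∪T. -/

import Mathlib

open Matrix

noncomputable def eigsDesc {n : ℕ} {A : Matrix (Fin n) (Fin n) ℝ} (hA : A.IsHermitian) : Fin n → ℝ :=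
  fun i => (hA.eigenvalues ∘ Tuple.sort hA.eigenvalues) i.rev

noncomputable def svDesc {m n : ℕ} (A : Matrix (Fin m) (Fin n) ℝ) : Fin n → ℝ :=
  fun i => Real.sqrt (eigsDesc (show (Aᵀ * A).IsHermitian by simpa using Matrix.isHermitian_conjTranspose_mul_self A) i)

noncomputable def slaterEntry {N L : ℕ} (U : Matrix (Fin N) (Fin L) ℝ) (o : Fin L → Bool) : ℝ :=
  if h : (Finset.univ.filter fun p => o p = true).card = N then
    (U.submatrix id ((Finset.univ.filter fun p => o p = true).orderEmbOfFin h)).det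
  else 0

noncomputable def compound {k : ℕ} (j : ℕ) (A : Matrix (Fin k) (Fin k) ℝ) :
    Matrix {s : Finset (Fin k) // s.card = j} {s : Finset (Fin k) // s.card = j} ℝ :=
  fun σ τ => (A.submatrix (σ.1.orderEmbOfFin σ.2) (τ.1.orderEmbOfFin τ.2)).det

def IsEigenvalue {ι : Type*} [Fintype ι] (M : Matrix ι ι ℝ) (lam : ℝ) : Prop :=
  ∃ v : ι → ℝ, v ≠ 0 ∧ M.mulVec v = lam • v

noncomputable def slaterReshape {N L : ℕ} (U : Matrix (Fin N) (Fin L) ℝ) (k : ℕ) :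
    Matrix (Fin (2 ^ k)) (Fin (2 ^ (L - k))) ℝ :=
  fun a b => slaterEntry U fun p =>
    if p.val < k then a.val.testBit p.val else b.val.testBit (p.val - k)

def leftBlock {N L : ℕ} (U : Matrix (Fin N) (Fin L) ℝ) (k : ℕ) (hk : k ≤ L) :
    Matrix (Fin N) (Fin k) ℝ :=
  U.submatrix id (fun i => Fin.castLE hk i)

def rightBlock {N L : ℕ} (U : Matrix (Fin N) (Fin L) ℝ) (k : ℕ) :
    Matrix (Fin N) (Fin (L - k)) ℝ :=
  U.submatrix id (fun i => ⟨k + i.val, by have := i.isLt; omega⟩)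

def shiftEmb (k L : ℕ) : Fin (L - k) ↪ Fin L :=
  ⟨fun i => ⟨k + i.val, by have := i.isLt; omega⟩, by
    intro a b h
    have : k + a.val = k + b.val := congrArg Fin.val h
    exact Fin.ext (by omega)⟩

noncomputable def Cmat {N L : ℕ} (k : ℕ) (hk : k ≤ L) (U : Matrix (Fin N) (Fin L) ℝ) (j : ℕ) :
    Matrix {s : Finset (Fin k) // s.card = j} {s : Finset (Fin (L - k)) // s.card = N - j} ℝ :=
  fun σ ρ => slaterEntry U fun p =>
    decide (p ∈ σ.1.map (Fin.castLEEmb hk) ∪ ρ.1.map (shiftEmb k L))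

def blockSym {m n : ℕ} (A : Matrix (Fin m) (Fin n) ℝ) : Matrix (Fin (m + n)) (Fin (m + n)) ℝ :=
  (Matrix.fromBlocks 0 A Aᵀ 0).submatrix finSumFinEquiv.symm finSumFinEquiv.symm


section RCBCauchyBinet
open Matrix Finset Equiv
set_option linter.unusedSectionVars false




variable {R : Type*} [CommRing R] {κ ι : Type*} [DecidableEq κ] [Fintype κ]
  [DecidableEq ι] [Fintype ι]

local notation "ε" σ => ((Equiv.Perm.sign σ : ℤ) : R)

private theorem rcb_aux {P : Matrix κ ι R} {Q : Matrix ι κ R} {f : κ → ι}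
    (H : ¬Function.Injective f) :
    (∑ σ : Perm κ, (ε σ) * ∏ x, P (σ x) (f x) * Q (f x) x) = 0 := by
  obtain ⟨i, j, hpij, hij⟩ : ∃ i j, f i = f j ∧ i ≠ j := by
    rw [Function.Injective] at H
    push_neg at H
    obtain ⟨i, j, h1, h2⟩ := H
    exact ⟨i, j, h1, h2⟩
  exact
    sum_involution (fun σ _ => σ * Equiv.swap i j)
      (fun σ _ => by
        have : (∏ x, P (σ x) (f x)) = ∏ x, P ((σ * Equiv.swap i j) x) (f x) :=
          Fintype.prod_equiv (swap i j) _ _ (by simp [apply_swap_eq_self hpij])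
        simp [this, Perm.sign_swap hij, -Perm.sign_swap', prod_mul_distrib])
      (fun σ _ _ => (not_congr Equiv.mul_swap_eq_iff).mpr hij) (fun _ _ => mem_univ _) fun σ _ =>
      Equiv.mul_swap_involutive i j σ

private theorem rcb_perm_sum (M N : Matrix κ κ R) :
    (∑ τ : Perm κ, ∑ σ : Perm κ, (ε σ) * ∏ i, M (σ i) (τ i) * N (τ i) i)
      = det M * det N :=
  calc
    (∑ τ : Perm κ, ∑ σ : Perm κ, (ε σ) * ∏ i, M (σ i) (τ i) * N (τ i) i)
    _ = ∑ σ : Perm κ, ∑ τ : Perm κ,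
        (∏ i, N (σ i) i) * (ε τ) * ∏ j, M (τ j) (σ j) := by
      simp only [mul_comm, mul_left_comm, prod_mul_distrib, mul_assoc]
    _ = ∑ σ : Perm κ, ∑ τ : Perm κ,
        (∏ i, N (σ i) i) * ((ε σ) * (ε τ)) * ∏ i, M (τ i) i :=
      (sum_congr rfl fun σ _ =>
        Fintype.sum_equiv (Equiv.mulRight σ⁻¹) _ _ fun τ => by
          have : (∏ j, M (τ j) (σ j)) = ∏ j, M ((τ * σ⁻¹) j) j := by
            rw [← (σ⁻¹ : _ ≃ _).prod_comp]
            simp only [Equiv.Perm.coe_mul, Perm.inv_def, Equiv.apply_symm_apply, Function.comp_apply]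
          have h : ((ε σ) * (ε τ * σ⁻¹) : R) = ε τ :=
            calc
              ((ε σ) * (ε τ * σ⁻¹) : R) = ε τ * σ⁻¹ * σ := by
                rw [mul_comm, Perm.sign_mul (τ * σ⁻¹)]
                simp only [Int.cast_mul, Units.val_mul]
              _ = ε τ := by simp only [inv_mul_cancel_right]
          simp_rw [Equiv.coe_mulRight, h]
          simp only [this])
    _ = det M * det N := by
      simp only [det_apply', Finset.mul_sum, mul_comm, mul_left_comm, mul_assoc]

private theorem rcb_factor (P : Matrix κ ι R) (Q : Matrix ι κ R) {W : Finset ι}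
    {c : κ → ι} (hc : Function.Injective c) (hW : Finset.univ.image c = W) :
    (Matrix.of fun i l => ∑ x ∈ W, P i x * Q x l)
      = (P.submatrix id c) * (Q.submatrix c id) := by
  ext i l
  rw [Matrix.of_apply, mul_apply, ← hW, Finset.sum_image (fun a _ b _ h => hc h)]
  rfl

/-- Cauchy–Binet -/
theorem rcb_cauchy_binet (P : Matrix κ ι R) (Q : Matrix ι κ R) :
    det (P * Q) = ∑ W ∈ Finset.univ.powersetCard (Fintype.card κ),
      det (Matrix.of fun i l => ∑ x ∈ W, P i x * Q x l) := by
  have step1 : det (P * Q)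
      = ∑ f : κ → ι, ∑ σ : Perm κ, (ε σ) * ∏ i, P (σ i) (f i) * Q (f i) i := by
    simp only [det_apply', mul_apply, prod_univ_sum, mul_sum, Fintype.piFinset_univ]
    rw [Finset.sum_comm]
  have step2 : (∑ f : κ → ι, ∑ σ : Perm κ, (ε σ) * ∏ i, P (σ i) (f i) * Q (f i) i)
      = ∑ f : κ → ι with Function.Injective f,
          ∑ σ : Perm κ, (ε σ) * ∏ i, P (σ i) (f i) * Q (f i) i := by
    refine (sum_subset (filter_subset _ _) fun f _ hinj => rcb_aux ?_).symm
    simpa only [true_and, mem_filter, mem_univ] using hinj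
  rw [step1, step2]
  rw [← Finset.sum_fiberwise_of_maps_to (g := fun f : κ → ι => Finset.univ.image f)
    (t := Finset.univ.powersetCard (Fintype.card κ)) ?_]
  · refine Finset.sum_congr rfl fun W hW => ?_
    have hcard : W.card = Fintype.card κ := (Finset.mem_powersetCard.mp hW).2
    have e : κ ≃ ↥W := Fintype.equivOfCardEq (by rw [Fintype.card_coe, hcard])
    set c : κ → ι := fun k => (e k : ι) with hc
    have hcinj : Function.Injective c := fun a b h => e.injective (Subtype.ext h)
    have himg : Finset.univ.image c = W := by
      apply Finset.eq_of_subset_of_card_le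
      · intro x hx
        simp only [Finset.mem_image] at hx
        obtain ⟨k, _, rfl⟩ := hx
        exact (e k).2
      · rw [Finset.card_image_of_injective _ hcinj, Finset.card_univ, hcard]
    have hfiber : ((Finset.univ : Finset (κ → ι)).filter Function.Injective).filter
        (fun f => Finset.univ.image f = W)
        = Finset.univ.image (fun τ : Perm κ => c ∘ τ) := by
      ext f
      simp only [Finset.mem_filter, Finset.mem_univ, true_and, Finset.mem_image]
      constructor
      · rintro ⟨hfinj, hfimg⟩
        have hmem : ∀ k, f k ∈ W := fun k => by
          rw [← hfimg]; exact Finset.mem_image_of_mem f (mem_univ k)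
        have hπinj : Function.Injective (fun k => e.symm ⟨f k, hmem k⟩) :=
          fun a b h => hfinj (congrArg Subtype.val (e.symm.injective h))
        have hπbij := (Finite.injective_iff_bijective).mp hπinj
        refine ⟨Equiv.ofBijective _ hπbij, ?_⟩
        funext k
        show c (e.symm ⟨f k, hmem k⟩) = f k
        simp [hc]
      · rintro ⟨τ, rfl⟩
        refine ⟨hcinj.comp τ.injective, ?_⟩
        rw [← himg]
        ext x
        simp only [Finset.mem_image, Function.comp_apply, mem_univ, true_and]
        exact ⟨fun ⟨a, h⟩ => ⟨τ a, h⟩, fun ⟨a, h⟩ => ⟨τ.symm a, by simpa using h⟩⟩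
    rw [hfiber, Finset.sum_image (fun a _ b _ h => by
      ext k; exact hcinj (congrFun h k))]
    rw [rcb_factor P Q hcinj himg, det_mul, ← rcb_perm_sum]
    rfl
  · intro f hf
    simp only [Finset.mem_filter, Finset.mem_univ, true_and] at hf
    rw [Finset.mem_powersetCard]
    exact ⟨Finset.subset_univ _, by rw [Finset.card_image_of_injective _ hf, Finset.card_univ]⟩

end RCBCauchyBinet

section RCBL2
open Matrix Finset
variable {R : Type*} [CommRing R]




theorem rcb_L2 {p q : Type*} [Fintype p] [Fintype q] [DecidableEq p] [DecidableEq q]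
    (N : Matrix q q R) (g : p → q) (hg : Function.Injective g) :
    det (fromBlocks 0 (N.submatrix g id)
      (Matrix.of fun k a => if k = g a then (1 : R) else 0)
      (Matrix.of fun k l => if ∃ a, g a = k then 0 else N k l))
      = (-1) ^ (Fintype.card p) * det N := by
  set sel : Matrix q p R := Matrix.of fun k a => if k = g a then (1 : R) else 0 with hsel
  set R2 : Matrix q q R := Matrix.of fun k l => if ∃ a, g a = k then 0 else N k l with hR2
  set Ns : Matrix p q R := N.submatrix g id with hNs
  set X : Matrix p q R := Matrix.of fun a k => if k = g a then (-1 : R) else 0 with hX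
  have hBR : sel * Ns + R2 = N := by
    ext k l
    simp only [Matrix.add_apply, Matrix.mul_apply, hsel, hR2, hNs, Matrix.of_apply,
      Matrix.submatrix_apply, id_eq, ite_mul, one_mul, zero_mul]
    by_cases h : ∃ a, g a = k
    · obtain ⟨a₀, ha₀⟩ := h
      rw [if_pos ⟨a₀, ha₀⟩, add_zero, Finset.sum_eq_single a₀
        (fun a _ ha => if_neg fun hk => ha (hg (ha₀.trans hk).symm))
        (fun h => absurd (Finset.mem_univ a₀) h)]
      rw [if_pos ha₀.symm, ha₀]
    · rw [if_neg h, Finset.sum_eq_zero fun a _ => if_neg fun hk => h ⟨a, hk.symm⟩, zero_add]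
  have hXsel : X * sel = (-1 : Matrix p p R) := by
    ext a b
    simp only [Matrix.mul_apply, hX, hsel, Matrix.of_apply, Matrix.neg_apply, Matrix.one_apply,
      ite_mul, zero_mul, neg_mul, one_mul]
    rw [Finset.sum_eq_single (g a)
      (fun k _ hk => by rw [if_neg hk])
      (fun h => absurd (Finset.mem_univ _) h), if_pos rfl]
    by_cases hab : a = b
    · subst hab; rw [if_pos rfl, if_pos rfl]
    · rw [if_neg (fun h => hab (hg h)), if_neg hab, neg_zero]
  have hXN : Ns + X * N = 0 := by
    ext a l
    simp only [Matrix.add_apply, Matrix.mul_apply, hX, hNs, Matrix.of_apply,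
      Matrix.submatrix_apply, id_eq, ite_mul, zero_mul, neg_mul, one_mul, Matrix.zero_apply]
    rw [Finset.sum_eq_single (g a)
      (fun k _ hk => by rw [if_neg hk])
      (fun h => absurd (Finset.mem_univ _) h), if_pos rfl]
    ring
  have hE : (fromBlocks 0 Ns sel R2) * (fromBlocks 1 Ns 0 1)
      = fromBlocks 0 Ns sel N := by
    rw [fromBlocks_multiply]
    simp only [Matrix.zero_mul, Matrix.mul_zero, Matrix.mul_one, Matrix.one_mul,
      zero_add, add_zero, hBR]
  have hF : (fromBlocks 1 X 0 1) * (fromBlocks 0 Ns sel N)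
      = fromBlocks (-1) 0 sel N := by
    rw [fromBlocks_multiply]
    simp only [Matrix.zero_mul, Matrix.mul_zero, Matrix.one_mul, Matrix.mul_one,
      zero_add, add_zero, hXsel, hXN]
  have hdetE : det (fromBlocks (1 : Matrix p p R) Ns 0 1) = 1 := by
    rw [det_fromBlocks_zero₂₁, det_one, det_one, mul_one]
  have hdetF : det (fromBlocks (1 : Matrix p p R) X 0 1) = 1 := by
    rw [det_fromBlocks_zero₂₁, det_one, det_one, mul_one]
  have key : det (fromBlocks 0 Ns sel R2) = det (fromBlocks (-1 : Matrix p p R) 0 sel N) := by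
    rw [← hF, ← hE, det_mul, det_mul, hdetE, hdetF, mul_one, one_mul]
  rw [key, det_fromBlocks_zero₁₂, Matrix.det_neg, det_one, mul_one]

end RCBL2

open Matrix Finset in
theorem refined_cauchy_binet {m n j : ℕ} (hjm : j ≤ m)
    (A : Matrix (Fin m) (Fin n) ℝ) (B : Matrix (Fin n) (Fin m) ℝ)
    (T U : Finset (Fin n)) (hTU : Disjoint T U)
    (hT : T.card = j) (hU : U.card = n - j) :
    ∑ S ∈ (U.powersetCard (m - j)).attach,
      (A.submatrix id ((S.1 ∪ T).orderEmbOfFin (by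
        obtain ⟨hsub, hcard⟩ := Finset.mem_powersetCard.mp S.2
        rw [Finset.card_union_of_disjoint
          (Finset.disjoint_of_subset_left hsub hTU.symm), hcard, hT]
        omega))).det *
      (B.submatrix ((S.1 ∪ T).orderEmbOfFin (by
        obtain ⟨hsub, hcard⟩ := Finset.mem_powersetCard.mp S.2
        rw [Finset.card_union_of_disjoint
          (Finset.disjoint_of_subset_left hsub hTU.symm), hcard, hT]
        omega)) id).det
    = (-1 : ℝ) ^ j *
      (Matrix.fromBlocks (0 : Matrix (Fin j) (Fin j) ℝ)
        (B.submatrix (T.orderEmbOfFin hT) id)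
        (A.submatrix id (T.orderEmbOfFin hT))
        (A.submatrix id (U.orderEmbOfFin hU) * B.submatrix (U.orderEmbOfFin hU) id)).det := by
  classical
  set tEmb := T.orderEmbOfFin hT with htEmb
  set uEmb := U.orderEmbOfFin hU with huEmb
  set P : Matrix (Fin j ⊕ Fin m) (Fin j ⊕ Fin n) ℝ := fromBlocks 1 0 0 A with hP
  set Q : Matrix (Fin j ⊕ Fin n) (Fin j ⊕ Fin m) ℝ :=
    fromBlocks 0 (B.submatrix tEmb id)
      (Matrix.of fun x τ => if x = tEmb τ then 1 else 0)
      (Matrix.of fun x l => if x ∈ U then B x l else 0) with hQ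
  set D : Finset (Fin j ⊕ Fin n) → ℝ :=
    fun W => det (Matrix.of fun i l => ∑ x ∈ W, P i x * Q x l) with hD
  set φ : Finset (Fin n) → Finset (Fin j ⊕ Fin n) :=
    fun s => Finset.univ.disjSum (s ∪ T) with hφ
  -- P * Q is the block matrix on the RHS
  have hAsel : A * (Matrix.of fun x τ => if x = tEmb τ then (1 : ℝ) else 0)
      = A.submatrix id tEmb := by
    ext i τ
    simp only [Matrix.mul_apply, Matrix.of_apply, Matrix.submatrix_apply, id_eq,
      mul_ite, mul_one, mul_zero]
    rw [Finset.sum_eq_single (tEmb τ) (fun x _ hx => if_neg hx)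
      (fun h => absurd (mem_univ _) h), if_pos rfl]
  have himgU : Finset.univ.image (fun c => uEmb c) = U := by
    ext x
    simp only [Finset.mem_image, Finset.mem_univ, true_and]
    constructor
    · rintro ⟨c, rfl⟩; exact Finset.orderEmbOfFin_mem U hU c
    · intro hx
      have : x ∈ Set.range uEmb := by rw [huEmb, Finset.range_orderEmbOfFin]; exact hx
      obtain ⟨c, hc⟩ := this
      exact ⟨c, hc⟩
  have hsumU : ∀ f : Fin n → ℝ, ∑ x ∈ U, f x = ∑ c : Fin (n - j), f (uEmb c) := by
    intro f
    rw [← himgU, Finset.sum_image (fun a _ b _ h => uEmb.injective h)]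
  have hAR2 : A * (Matrix.of fun x l => if x ∈ U then B x l else 0)
      = A.submatrix id uEmb * B.submatrix uEmb id := by
    ext i l
    rw [Matrix.mul_apply, Matrix.mul_apply]
    simp only [Matrix.of_apply, Matrix.submatrix_apply, id_eq, mul_ite, mul_zero]
    rw [Finset.sum_ite_mem, Finset.univ_inter, hsumU (fun x => A i x * B x l)]
  have hPQ : P * Q = Matrix.fromBlocks 0
      (B.submatrix tEmb id) (A.submatrix id tEmb)
      (A.submatrix id uEmb * B.submatrix uEmb id) := by
    rw [hP, hQ, fromBlocks_multiply]
    simp only [Matrix.one_mul, Matrix.zero_mul, Matrix.mul_zero, zero_add, add_zero,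
      hAsel, hAR2]
  -- Cauchy-Binet
  have hCB : det (P * Q) = ∑ W ∈ Finset.univ.powersetCard (j + m), D W := by
    have h := rcb_cauchy_binet P Q
    rwa [Fintype.card_sum, Fintype.card_fin, Fintype.card_fin] at h
  -- main term computation
  have hmain : ∀ S, S ∈ U.powersetCard (m - j) → ∀ hST : (S ∪ T).card = m,
      D (φ S) = (-1 : ℝ) ^ j *
        ((A.submatrix id ((S ∪ T).orderEmbOfFin hST)).det *
         (B.submatrix ((S ∪ T).orderEmbOfFin hST) id).det) := by
    intro S hS hST
    obtain ⟨hSU, hScard⟩ := Finset.mem_powersetCard.mp hS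
    set embST := (S ∪ T).orderEmbOfFin hST with hembST
    set c : Fin j ⊕ Fin m → Fin j ⊕ Fin n := Sum.map id (⇑embST) with hc
    have hcinj : Function.Injective c :=
      Function.Injective.sumMap (fun a b h => h) embST.injective
    have himgc : Finset.univ.image c = φ S := by
      ext y
      rcases y with a | x
      · simp only [Finset.mem_image, Finset.mem_univ, true_and, hφ, Finset.inl_mem_disjSum]
        exact ⟨fun _ => trivial, fun _ => ⟨Sum.inl a, rfl⟩⟩
      · simp only [Finset.mem_image, Finset.mem_univ, true_and, hφ, Finset.inr_mem_disjSum]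
        constructor
        · rintro ⟨k, hk⟩
          rcases k with b | k
          · exact absurd hk (by simp [hc])
          · have : embST k = x := by simpa [hc] using hk
            rw [← this]; exact Finset.orderEmbOfFin_mem _ hST k
        · intro hx
          have : x ∈ Set.range embST := by rw [hembST, Finset.range_orderEmbOfFin]; exact hx
          obtain ⟨k, hk⟩ := this
          exact ⟨Sum.inr k, by simp [hc, hk]⟩
    have hfact : D (φ S) = det (P.submatrix id c) * det (Q.submatrix c id) := by
      rw [hD]
      show (Matrix.of fun i l => ∑ x ∈ φ S, P i x * Q x l).det = _
      rw [rcb_factor P Q hcinj himgc, det_mul]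
    have hPsub : P.submatrix id c = fromBlocks 1 0 0 (A.submatrix id embST) := by
      ext i k
      rcases i with a | i <;> rcases k with b | k <;>
        simp [hP, hc, Matrix.fromBlocks_apply₁₁, Matrix.fromBlocks_apply₁₂,
          Matrix.fromBlocks_apply₂₁, Matrix.fromBlocks_apply₂₂]
    have hTmem : ∀ τ : Fin j, tEmb τ ∈ S ∪ T := fun τ =>
      Finset.mem_union_right _ (Finset.orderEmbOfFin_mem T hT τ)
    set g : Fin j → Fin m := fun τ => ((S ∪ T).orderIsoOfFin hST).symm ⟨tEmb τ, hTmem τ⟩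
      with hgdef
    have hgspec : ∀ τ, embST (g τ) = tEmb τ := by
      intro τ
      have h1 := Finset.coe_orderIsoOfFin_apply (S ∪ T) hST (g τ)
      rw [← hembST] at h1
      rw [← h1, hgdef, OrderIso.apply_symm_apply]
    have hginj : Function.Injective g := fun a b h =>
      tEmb.injective (by rw [← hgspec a, ← hgspec b, h])
    have hrange : ∀ k : Fin m, (∃ a, g a = k) ↔ embST k ∈ T := by
      intro k
      constructor
      · rintro ⟨a, rfl⟩; rw [hgspec]; exact Finset.orderEmbOfFin_mem T hT a
      · intro hk
        have : embST k ∈ Set.range tEmb := by rw [htEmb, Finset.range_orderEmbOfFin]; exact hk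
        obtain ⟨τ, hτ⟩ := this
        exact ⟨τ, embST.injective (by rw [hgspec, hτ])⟩
    have hQsub : Q.submatrix c id = fromBlocks 0 ((B.submatrix embST id).submatrix g id)
        (Matrix.of fun k a => if k = g a then (1 : ℝ) else 0)
        (Matrix.of fun k l => if ∃ a, g a = k then 0 else (B.submatrix embST id) k l) := by
      ext i k
      rcases i with a | i <;> rcases k with b | k
      · simp [hQ, hc]
      · simp [hQ, hc, hgspec]
      · show (if embST i = tEmb b then (1:ℝ) else 0) = if i = g b then (1:ℝ) else 0
        have : embST i = tEmb b ↔ i = g b := by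
          rw [← hgspec b]
          exact embST.injective.eq_iff
        by_cases h : i = g b
        · rw [if_pos (this.mpr h), if_pos h]
        · rw [if_neg (fun hh => h (this.mp hh)), if_neg h]
      · show (if embST i ∈ U then B (embST i) k else 0)
          = if ∃ a, g a = i then 0 else (B.submatrix embST id) i k
        have hUiff : embST i ∈ U ↔ ¬∃ a, g a = i := by
          rw [hrange]
          constructor
          · intro hu ht; exact Finset.disjoint_left.mp hTU ht hu
          · intro hnt
            rcases Finset.mem_union.mp (Finset.orderEmbOfFin_mem _ hST i) with h | h
            · exact hSU h
            · exact absurd h hnt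
        by_cases h : ∃ a, g a = i
        · rw [if_pos h, if_neg (fun hu => (hUiff.mp hu) h)]
        · rw [if_neg h, if_pos (hUiff.mpr h)]
          rfl
    rw [hfact, hPsub, hQsub, det_fromBlocks_zero₂₁, det_one, one_mul,
]
    have hL2 := rcb_L2 (B.submatrix embST id) g hginj
    rw [Fintype.card_fin] at hL2
    rw [mul_left_comm]
    convert congrArg (fun z => (A.submatrix id embST).det * z) hL2
  -- vanishing
  have hvan : ∀ W ∈ Finset.univ.powersetCard (j + m),
      W ∉ (U.powersetCard (m - j)).image φ → D W = 0 := by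
    intro W hW hWni
    have hcardW : W.card = j + m := (Finset.mem_powersetCard.mp hW).2
    by_cases h1 : ∀ a : Fin j, Sum.inl a ∈ W
    · by_cases h2 : ∀ τ : Fin j, Sum.inr (tEmb τ) ∈ W
      · by_cases h3 : ∀ x : Fin n, Sum.inr x ∈ W → x ∈ T ∨ x ∈ U
        · -- W is in the image: contradiction
          exfalso
          apply hWni
          have hLT : W.toLeft = Finset.univ := by
            ext a; simp [h1 a]
          have hTsub : T ⊆ W.toRight := by
            intro t ht
            have : t ∈ Set.range tEmb := by rw [htEmb, Finset.range_orderEmbOfFin]; exact ht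
            obtain ⟨τ, rfl⟩ := this
            exact Finset.mem_toRight.mpr (h2 τ)
          have hcardR : W.toRight.card = m := by
            have hh := Finset.card_toLeft_add_card_toRight (u := W)
            rw [hLT, Finset.card_univ, Fintype.card_fin, hcardW] at hh
            omega
          set S := W.toRight \ T with hSdef
          have hSU : S ⊆ U := by
            intro x hx
            obtain ⟨hx1, hx2⟩ := Finset.mem_sdiff.mp hx
            rcases h3 x (Finset.mem_toRight.mp hx1) with h | h
            · exact absurd h hx2
            · exact h
          have hSTeq : S ∪ T = W.toRight := Finset.sdiff_union_of_subset hTsub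
          have hScard : S.card = m - j := by
            rw [hSdef, Finset.card_sdiff_of_subset hTsub, hcardR, hT]
          rw [Finset.mem_image]
          refine ⟨S, Finset.mem_powersetCard.mpr ⟨hSU, hScard⟩, ?_⟩
          rw [hφ]
          show Finset.univ.disjSum (S ∪ T) = W
          rw [hSTeq, ← hLT, Finset.toLeft_disjSum_toRight]
        · -- junk element
          push_neg at h3
          obtain ⟨x, hxW, hxT, hxU⟩ := h3
          have e : (Fin j ⊕ Fin m) ≃ ↥W :=
            Fintype.equivOfCardEq (by
              rw [Fintype.card_coe, hcardW, Fintype.card_sum, Fintype.card_fin,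
                Fintype.card_fin])
          set c : Fin j ⊕ Fin m → Fin j ⊕ Fin n := fun k => (e k : Fin j ⊕ Fin n) with hcdef
          have hcinj : Function.Injective c := fun a b h => e.injective (Subtype.ext h)
          have himgc : Finset.univ.image c = W := by
            apply Finset.eq_of_subset_of_card_le
            · intro y hy
              simp only [Finset.mem_image] at hy
              obtain ⟨k, _, rfl⟩ := hy
              exact (e k).2
            · rw [Finset.card_image_of_injective _ hcinj, Finset.card_univ, hcardW,
                Fintype.card_sum, Fintype.card_fin, Fintype.card_fin]
          rw [hD]
          show (Matrix.of fun i l => ∑ x ∈ W, P i x * Q x l).det = 0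
          rw [rcb_factor P Q hcinj himgc, det_mul]
          have : det (Q.submatrix c id) = 0 := by
            apply det_eq_zero_of_row_eq_zero (e.symm ⟨Sum.inr x, hxW⟩)
            intro l
            have hcx : c (e.symm ⟨Sum.inr x, hxW⟩) = Sum.inr x := by
              rw [hcdef]; simp
            rw [Matrix.submatrix_apply, hcx]
            rcases l with τ | l
            · show (if x = tEmb τ then (1:ℝ) else 0) = 0
              exact if_neg (fun hh => hxT (by rw [hh, htEmb]; exact Finset.orderEmbOfFin_mem T hT τ))
            · show (if x ∈ U then B x l else 0) = 0
              exact if_neg hxU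
          rw [this, mul_zero]
      · push_neg at h2
        obtain ⟨τ, hτ⟩ := h2
        apply det_eq_zero_of_column_eq_zero (Sum.inl τ)
        intro i
        rw [Matrix.of_apply]
        apply Finset.sum_eq_zero
        intro y hy
        rcases y with b | x
        · show P i (Sum.inl b) * Q (Sum.inl b) (Sum.inl τ) = 0
          rw [hQ]
          show P i (Sum.inl b) * (0 : Matrix (Fin j) (Fin j) ℝ) b τ = 0
          rw [Matrix.zero_apply, mul_zero]
        · show P i (Sum.inr x) * Q (Sum.inr x) (Sum.inl τ) = 0
          rw [hQ]
          show P i (Sum.inr x) * (if x = tEmb τ then (1:ℝ) else 0) = 0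
          rw [if_neg (fun hh => hτ (by rwa [hh] at hy)), mul_zero]
    · push_neg at h1
      obtain ⟨a, ha⟩ := h1
      apply det_eq_zero_of_row_eq_zero (Sum.inl a)
      intro l
      rw [Matrix.of_apply]
      apply Finset.sum_eq_zero
      intro y hy
      rcases y with b | x
      · show P (Sum.inl a) (Sum.inl b) * Q (Sum.inl b) l = 0
        rw [hP]
        show (1 : Matrix (Fin j) (Fin j) ℝ) a b * Q (Sum.inl b) l = 0
        rw [Matrix.one_apply, if_neg (fun hh : a = b => ha (by rwa [hh])), zero_mul]
      · show P (Sum.inl a) (Sum.inr x) * Q (Sum.inr x) l = 0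
        rw [hP]
        show (0 : Matrix (Fin j) (Fin n) ℝ) a x * Q (Sum.inr x) l = 0
        rw [Matrix.zero_apply, zero_mul]
  -- assembly
  have himg_sub : (U.powersetCard (m - j)).image φ ⊆ Finset.univ.powersetCard (j + m) := by
    intro W hW
    obtain ⟨S, hS, rfl⟩ := Finset.mem_image.mp hW
    obtain ⟨hSU, hScard⟩ := Finset.mem_powersetCard.mp hS
    refine Finset.mem_powersetCard.mpr ⟨Finset.subset_univ _, ?_⟩
    rw [hφ]
    show (Finset.univ.disjSum (S ∪ T)).card = j + m
    rw [Finset.card_disjSum, Finset.card_univ, Fintype.card_fin,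
      Finset.card_union_of_disjoint (Finset.disjoint_of_subset_left hSU hTU.symm),
      hScard, hT]
    omega
  have hφinjOn : ∀ S ∈ U.powersetCard (m - j), ∀ S' ∈ U.powersetCard (m - j),
      φ S = φ S' → S = S' := by
    intro S hS S' hS' h
    have hST : S ∪ T = S' ∪ T := by
      have hh := congrArg Finset.toRight h
      rw [hφ] at hh
      simpa using hh
    have hSU := (Finset.mem_powersetCard.mp hS).1
    have hS'U := (Finset.mem_powersetCard.mp hS').1
    ext x
    constructor
    · intro hx
      rcases Finset.mem_union.mp (hST ▸ Finset.mem_union_left T hx) with h' | h'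
      · exact h'
      · exact absurd (hSU hx) (Finset.disjoint_left.mp hTU h')
    · intro hx
      rcases Finset.mem_union.mp (hST ▸ Finset.mem_union_left T hx) with h' | h'
      · exact h'
      · exact absurd (hS'U hx) (Finset.disjoint_left.mp hTU h')
  have hsq : (-1 : ℝ) ^ j * (-1 : ℝ) ^ j = 1 := by
    rw [← pow_add]
    exact Even.neg_one_pow ⟨j, rfl⟩
  calc
    ∑ S ∈ (U.powersetCard (m - j)).attach,
      (A.submatrix id ((S.1 ∪ T).orderEmbOfFin (by
        obtain ⟨hsub, hcard⟩ := Finset.mem_powersetCard.mp S.2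
        rw [Finset.card_union_of_disjoint
          (Finset.disjoint_of_subset_left hsub hTU.symm), hcard, hT]
        omega))).det *
      (B.submatrix ((S.1 ∪ T).orderEmbOfFin (by
        obtain ⟨hsub, hcard⟩ := Finset.mem_powersetCard.mp S.2
        rw [Finset.card_union_of_disjoint
          (Finset.disjoint_of_subset_left hsub hTU.symm), hcard, hT]
        omega)) id).det
      = ∑ S ∈ (U.powersetCard (m - j)).attach, ((-1 : ℝ) ^ j * D (φ S.1)) := by
        refine Finset.sum_congr rfl fun S _ => ?_
        have hST : (S.1 ∪ T).card = m := by
          obtain ⟨hsub, hcard⟩ := Finset.mem_powersetCard.mp S.2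
          rw [Finset.card_union_of_disjoint
            (Finset.disjoint_of_subset_left hsub hTU.symm), hcard, hT]
          omega
        rw [hmain S.1 S.2 hST, ← mul_assoc, hsq, one_mul]
    _ = (-1 : ℝ) ^ j * ∑ S ∈ (U.powersetCard (m - j)).attach, D (φ S.1) := by
        rw [Finset.mul_sum]
    _ = (-1 : ℝ) ^ j * ∑ S ∈ U.powersetCard (m - j), D (φ S) := by
        exact congrArg (fun z => (-1 : ℝ) ^ j * z)
          (Finset.sum_attach (U.powersetCard (m - j)) fun s => D (φ s))
    _ = (-1 : ℝ) ^ j * ∑ W ∈ (U.powersetCard (m - j)).image φ, D W := by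
        rw [Finset.sum_image hφinjOn]
    _ = (-1 : ℝ) ^ j * ∑ W ∈ Finset.univ.powersetCard (j + m), D W := by
        rw [Finset.sum_subset himg_sub (fun W hW hWni => hvan W hW hWni)]
    _ = (-1 : ℝ) ^ j * det (P * Q) := by rw [hCB]
    _ = _ := by rw [hPQ]
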